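/- Let 0 < λ ≤ 1. The Borel probability mass function p(n) = (λn)^{n-1}/n! · e^{-λn} for n ∈ ℕ, n ≥ 1, satisfies the convolution recursion p(n+1) = ∑_{k=1}^n (λ^k/k! · e^{-λ}) · ∑_{(n_1,...,n_k) ∈ ℕ^k, n_i ≥ 1, n_1+⋯+n_k = n} ∏_{ℓ=1}^k p(n_ℓ) for all n ≥ 1. -/

import Mathlib

open Finset
theorem FD : ∀ n m : ℕ, m < n → ∀ x : ℝ, ∑ k ∈ range (n+1), (-1:ℝ)^k * (n.choose k) * (x + k)^m = 0 := by
  intro n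
  induction n with
  | zero => intro m hm; omega
  | succ n ih =>
    intro m hm x
    have g0 : ((n.choose (n+1) : ℕ) : ℝ) = 0 := by
      rw [Nat.choose_eq_zero_of_lt (by omega)]; norm_num
    have key : ∑ k ∈ range (n+2), (-1:ℝ)^k * ((n+1).choose k) * (x + k)^m
        = ∑ k ∈ range (n+1), (-1:ℝ)^k * (n.choose k) * ((x + k)^m - ((x+1) + k)^m) := by
      rw [Finset.sum_range_succ' (fun k => (-1:ℝ)^k * ((n+1).choose k) * (x + k)^m) (n+1)]
      have h1 : ∀ k ∈ range (n+1),
          (-1:ℝ)^(k+1) * ((n+1).choose (k+1)) * (x + ↑(k+1))^m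
          = -((-1:ℝ)^k * (n.choose k) * ((x+1) + k)^m)
            + (-1:ℝ)^(k+1) * (n.choose (k+1)) * (x + ↑(k+1))^m := by
        intro k _
        rw [Nat.choose_succ_succ]
        push_cast
        ring
      rw [Finset.sum_congr rfl h1, Finset.sum_add_distrib]
      have h3 : ∑ k ∈ range (n+1), (-1:ℝ)^(k+1) * (n.choose (k+1)) * (x + ↑(k+1))^m
          = ∑ k ∈ range (n+1), (-1:ℝ)^k * (n.choose k) * (x + k)^m
            - (-1:ℝ)^0 * (n.choose 0) * (x + (0:ℕ))^m := by
        have h4 := Finset.sum_range_succ' (fun k => (-1:ℝ)^k * (n.choose k) * (x + k)^m) (n+1)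
        have h5 : ∑ k ∈ range (n+2), (-1:ℝ)^k * (n.choose k) * (x + k)^m
            = ∑ k ∈ range (n+1), (-1:ℝ)^k * (n.choose k) * (x + k)^m := by
          rw [Finset.sum_range_succ, g0]; ring
        rw [h5] at h4
        linarith [h4]
      have h7 : ∑ k ∈ range (n+1), (-1:ℝ)^k * (n.choose k) * ((x + k)^m - ((x+1) + k)^m)
          = ∑ k ∈ range (n+1), (-1:ℝ)^k * (n.choose k) * (x + k)^m
            - ∑ k ∈ range (n+1), (-1:ℝ)^k * (n.choose k) * ((x+1) + k)^m := by
        rw [← Finset.sum_sub_distrib]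
        exact Finset.sum_congr rfl fun k _ => by ring
      rw [h3, Finset.sum_neg_distrib, h7]
      push_cast [Nat.choose_zero_right]
      ring
    rw [key]
    match m, hm with
    | 0, _ => simp
    | (m+1), hm =>
      have expand : ∀ k ∈ range (n+1), (-1:ℝ)^k * (n.choose k) * ((x + k)^(m+1) - ((x+1) + k)^(m+1))
          = ∑ j ∈ range (m+1), -(((m+1).choose j : ℝ) * ((-1:ℝ)^k * (n.choose k) * (x + k)^j)) := by
        intro k _
        have hb : ((x + k) + 1)^(m+1) = ∑ j ∈ range (m+2), (x + k)^j * 1^(m+1-j) * ((m+1).choose j) := add_pow _ _ _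
        rw [Finset.sum_range_succ] at hb
        simp only [one_pow, mul_one, Nat.choose_self, Nat.cast_one] at hb
        have h6 : (x + k)^(m+1) - ((x+1) + k)^(m+1) = -∑ j ∈ range (m+1), (x + k)^j * ((m+1).choose j) := by
          have hxx : (x+1) + (k:ℝ) = (x + k) + 1 := by ring
          rw [hxx, hb]; ring
        rw [h6, mul_neg, Finset.mul_sum, ← Finset.sum_neg_distrib]
        refine Finset.sum_congr rfl fun j _ => ?_
        ring
      rw [Finset.sum_congr rfl expand, Finset.sum_comm]
      refine Finset.sum_eq_zero fun j hj => ?_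
      have hj' : j < n := by
        simp only [Finset.mem_range] at hj; omega
      rw [Finset.sum_neg_distrib, ← Finset.mul_sum, ih j hj' x]
      simp


theorem abel1 : ∀ n : ℕ, ∀ y : ℝ,
    ∑ k ∈ range (n+1), (n.choose k : ℝ) * (1+k)^(k-1) * (y + ((n - k : ℕ) : ℝ))^(n-k)
      = (y + n + 1)^n := by
  intro n
  induction n with
  | zero => intro y; simp
  | succ n ih =>
    intro y
    set F : ℝ → ℝ := fun z => ∑ k ∈ range (n+2),
      ((n+1).choose k : ℝ) * (1+k)^(k-1) * (z + (((n+1) - k : ℕ) : ℝ))^((n+1)-k) with hF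
    set G : ℝ → ℝ := fun z => (z + (↑(n+1) : ℝ) + 1)^(n+1) with hG
    have hFd : ∀ z : ℝ, HasDerivAt F ((n+1 : ℝ) * (z + ↑(n+1) + 1)^n) z := by
      intro z
      have h1 : HasDerivAt F (∑ k ∈ range (n+2),
          ((n+1).choose k : ℝ) * (1+k)^(k-1) *
            ((((n+1)-k : ℕ) : ℝ) * (z + (((n+1) - k : ℕ) : ℝ))^(((n+1)-k)-1))) z := by
        apply HasDerivAt.fun_sum
        intro k _
        have h2 : HasDerivAt (fun z : ℝ => (z + (((n+1) - k : ℕ) : ℝ))^((n+1)-k))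
            ((((n+1)-k : ℕ) : ℝ) * (z + (((n+1) - k : ℕ) : ℝ))^(((n+1)-k)-1)) z := by
          have h3 := ((hasDerivAt_id z).add_const (((n+1) - k : ℕ) : ℝ)).fun_pow ((n+1)-k)
          simpa using h3
        exact h2.const_mul _
      convert h1 using 1
      rw [Finset.sum_range_succ]
      have hz : ((((n+1)-(n+1) : ℕ)) : ℝ) * (z + ((((n+1)-(n+1)) : ℕ) : ℝ))^(((n+1)-(n+1))-1) = 0 := by
        norm_num
      rw [hz, mul_zero, add_zero]
      have hcongr : ∀ k ∈ range (n+1),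
          ((n+1).choose k : ℝ) * (1+k)^(k-1) *
            ((((n+1)-k : ℕ) : ℝ) * (z + (((n+1) - k : ℕ) : ℝ))^(((n+1)-k)-1))
          = (n+1 : ℝ) * ((n.choose k : ℝ) * (1+k)^(k-1) * ((z+1) + ((n - k : ℕ) : ℝ))^(n-k)) := by
        intro k hk
        have hk' : k ≤ n := by simpa [Nat.lt_succ_iff] using hk
        have e1 : (n+1) - k = (n-k) + 1 := by omega
        have e2 : ((n+1).choose k : ℝ) * (((n+1)-k : ℕ) : ℝ) = ((n+1) : ℝ) * (n.choose k : ℝ) := by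
          have : (n+1).choose k * ((n+1) - k) = (n+1) * n.choose k := by
            rw [← Nat.choose_succ_right_eq, Nat.add_one_mul_choose_eq]
          exact_mod_cast congrArg (fun t : ℕ => (t : ℝ)) this
        have e3 : (z + (((n+1) - k : ℕ) : ℝ)) = ((z+1) + ((n - k : ℕ) : ℝ)) := by
          rw [e1]; push_cast; ring
        rw [e3, e1]
        simp only [Nat.add_sub_cancel]
        calc ((n+1).choose k : ℝ) * (1+k)^(k-1) * ((((n-k)+1 : ℕ) : ℝ) * ((z+1) + ((n - k : ℕ) : ℝ))^(n-k))
            = (((n+1).choose k : ℝ) * ((((n-k)+1 : ℕ)) : ℝ)) * ((1+k)^(k-1) * ((z+1) + ((n - k : ℕ) : ℝ))^(n-k)) := by ring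
          _ = (((n+1) : ℝ) * (n.choose k : ℝ)) * ((1+k)^(k-1) * ((z+1) + ((n - k : ℕ) : ℝ))^(n-k)) := by
              rw [← e2, ← e1]
          _ = (n+1 : ℝ) * ((n.choose k : ℝ) * (1+k)^(k-1) * ((z+1) + ((n - k : ℕ) : ℝ))^(n-k)) := by ring
      rw [Finset.sum_congr rfl hcongr, ← Finset.mul_sum, ih (z+1)]
      push_cast
      ring
    have hGd : ∀ z : ℝ, HasDerivAt G ((n+1 : ℝ) * (z + ↑(n+1) + 1)^n) z := by
      intro z
      have h3 := ((hasDerivAt_id z).add_const ((↑(n+1) : ℝ) + 1)).fun_pow (n+1)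
      simp only [mul_one, Nat.add_sub_cancel, id_eq] at h3
      have heq : (fun w : ℝ => (w + ((↑(n+1) : ℝ) + 1))^(n+1)) = G := by
        funext w
        simp only [hG]
        ring_nf
      rw [heq] at h3
      refine h3.congr_deriv ?_
      push_cast
      ring
    -- F - G is constant
    have hconst : ∀ a b : ℝ, F a - G a = F b - G b := by
      intro a b
      have hdiff : Differentiable ℝ (fun z => F z - G z) :=
        fun z => ((hFd z).sub (hGd z)).differentiableAt
      have hderiv : ∀ z, deriv (fun z => F z - G z) z = 0 := by
        intro z
        have := (hFd z).fun_sub (hGd z)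
        simpa using this.deriv
      exact is_const_of_deriv_eq_zero hdiff hderiv a b
    -- evaluate at y0
    have hF0 : F (-(↑n + 2)) = 0 := by
      simp only [hF]
      have hcongr : ∀ k ∈ range (n+2),
          ((n+1).choose k : ℝ) * (1+k)^(k-1) * ((-(↑n + 2)) + (((n+1) - k : ℕ) : ℝ))^((n+1)-k)
          = (-1:ℝ)^(n+1) * ((-1:ℝ)^k * ((n+1).choose k : ℝ) * ((1:ℝ) + k)^n) := by
        intro k hk
        have hk' : k ≤ n + 1 := by simpa [Nat.lt_succ_iff] using hk
        have e1 : ((((n+1) - k : ℕ)) : ℝ) = (n:ℝ) + 1 - k := by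
          push_cast [hk']; ring
        have e2 : (-(↑n + 2)) + (((n+1) - k : ℕ) : ℝ) = -(1 + (k:ℝ)) := by
          rw [e1]; ring
        rw [e2, neg_pow]
        have e3 : (1 + (k:ℝ))^(k-1) * (1 + (k:ℝ))^((n+1)-k) = (1 + (k:ℝ))^n := by
          rcases Nat.eq_zero_or_pos k with hk0 | hk0
          · subst hk0; norm_num
          · rw [← pow_add]
            congr 1
            omega
        have e4 : (-1:ℝ)^((n+1)-k) = (-1:ℝ)^(n+1) * (-1:ℝ)^k := by
          have : (-1:ℝ)^((n+1)-k) * ((-1:ℝ)^k * (-1:ℝ)^k) = ((-1:ℝ)^(n+1)) * (-1:ℝ)^k := by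
            rw [← mul_assoc, ← pow_add]
            rw [show (n+1)-k+k = n+1 from by omega]
          have hsq : (-1:ℝ)^k * (-1:ℝ)^k = 1 := by
            rw [← pow_add, ← two_mul, pow_mul]; norm_num
          rw [hsq, mul_one] at this
          exact this
        calc ((n+1).choose k : ℝ) * (1+k)^(k-1) * ((-1:ℝ)^((n+1)-k) * (1 + (k:ℝ))^((n+1)-k))
            = (-1:ℝ)^((n+1)-k) * (((n+1).choose k : ℝ) * ((1+(k:ℝ))^(k-1) * (1 + (k:ℝ))^((n+1)-k))) := by ring
          _ = (-1:ℝ)^((n+1)-k) * (((n+1).choose k : ℝ) * (1 + (k:ℝ))^n) := by rw [e3]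
          _ = (-1:ℝ)^(n+1) * ((-1:ℝ)^k * ((n+1).choose k : ℝ) * ((1:ℝ) + k)^n) := by rw [e4]; ring
      rw [Finset.sum_congr rfl hcongr, ← Finset.mul_sum, FD (n+1) n (Nat.lt_succ_self n) 1]
      ring
    have hG0 : G (-(↑n + 2)) = 0 := by
      simp only [hG]
      have : (-(↑n + 2) + (↑(n+1) : ℝ) + 1) = 0 := by push_cast; ring
      rw [this]
      exact zero_pow (Nat.succ_ne_zero n)
    have := hconst y (-(↑n + 2))
    rw [hF0, hG0] at this
    have : F y = G y := by linarith
    simp only [hF, hG] at this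
    simpa using this


theorem C1 (n : ℕ) (hn : 1 ≤ n) :
    ∑ m ∈ Icc 1 n, (n.choose m : ℝ) * (m:ℝ)^m * (((n-m : ℕ) : ℝ)+1)^(n-m-1)
      = n * ((n:ℝ)+1)^(n-1) := by
  have h := abel1 n 0
  rw [Finset.sum_range_succ] at h
  simp only [Nat.choose_self, Nat.sub_self, Nat.cast_one, Nat.cast_zero, add_zero, zero_add,
    pow_zero, mul_one, one_mul] at h
  -- h : ∑ k ∈ range n, C(n,k)(1+k)^(k-1)(↑(n-k))^(n-k) + (1+↑n)^(n-1) = (↑n+1)^n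
  have hre : ∑ k ∈ range n, (n.choose k : ℝ) * (1+k)^(k-1) * ((((n-k) : ℕ)):ℝ)^(n-k)
      = ∑ m ∈ Icc 1 n, (n.choose m : ℝ) * (m:ℝ)^m * (((n-m : ℕ) : ℝ)+1)^(n-m-1) := by
    refine Finset.sum_nbij' (fun k => n - k) (fun m => n - m) ?_ ?_ ?_ ?_ ?_
    · intro k hk; simp only [Finset.mem_range] at hk; simp only [Finset.mem_Icc]; omega
    · intro m hm; simp only [Finset.mem_Icc] at hm; simp only [Finset.mem_range]; omega
    · intro k hk; simp only [Finset.mem_range] at hk; show n - (n - k) = k; omega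
    · intro m hm; simp only [Finset.mem_Icc] at hm; show n - (n - m) = m; omega
    · intro k hk
      simp only [Finset.mem_range] at hk
      show (n.choose k : ℝ) * (1+k)^(k-1) * ((((n-k) : ℕ)):ℝ)^(n-k)
        = (n.choose (n-k) : ℝ) * (((n-k : ℕ)):ℝ)^(n-k) * ((((n-(n-k) : ℕ)) : ℝ)+1)^(n-(n-k)-1)
      have e1 : n - (n - k) = k := by omega
      have e2 : n.choose (n - k) = n.choose k := Nat.choose_symm (by omega)
      rw [e1, e2]
      ring
  rw [hre] at h
  have hp : ((n:ℝ)+1)^n = ((n:ℝ)+1)^(n-1) * ((n:ℝ)+1) := by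
    rw [← pow_succ]
    congr 1
    omega
  rw [hp] at h
  have : (1+(n:ℝ))^(n-1) = ((n:ℝ)+1)^(n-1) := by ring_nf
  rw [this] at h
  linarith [h]


noncomputable def Bb (j : ℕ) : ℝ := (j:ℝ)^(j-1) / (j.factorial : ℝ)

def Om (k n : ℕ) : Finset (Fin k → ℕ) :=
  (Finset.Nat.antidiagonalTuple k n).filter (fun f => ∀ i, 1 ≤ f i)

lemma mem_Om {k n : ℕ} {f : Fin k → ℕ} : f ∈ Om k n ↔ (∑ i, f i = n ∧ ∀ i, 1 ≤ f i) := by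
  simp [Om, Finset.mem_filter, Finset.Nat.mem_antidiagonalTuple]

noncomputable def Sk (k n : ℕ) : ℝ := ∑ f ∈ Om k n, ∏ ℓ, Bb (f ℓ)

noncomputable def Pp (n : ℕ) : ℝ := ∑ k ∈ range (n+1), Sk k n / (k.factorial : ℝ)

lemma Sk_zero_succ (n : ℕ) (hn : 1 ≤ n) : Sk 0 n = 0 := by
  have : Om 0 n = ∅ := by
    apply Finset.eq_empty_of_forall_notMem
    intro f hf
    rcases mem_Om.mp hf with ⟨hs, _⟩
    simp at hs
    omega
  simp [Sk, this]

lemma Sk_zero_zero : Sk 0 0 = 1 := by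
  have : Om 0 0 = {![]} := by
    rw [Om, Finset.Nat.antidiagonalTuple_zero_zero]
    rfl
  simp [Sk, this]

lemma Sk_big {k n : ℕ} (h : n < k) : Sk k n = 0 := by
  have : Om k n = ∅ := by
    apply Finset.eq_empty_of_forall_notMem
    intro f hf
    rcases mem_Om.mp hf with ⟨hs, hp⟩
    have : k ≤ n := by
      calc k = ∑ _i : Fin k, 1 := by simp
        _ ≤ ∑ i, f i := Finset.sum_le_sum (fun i _ => hp i)
        _ = n := hs
    omega
  simp [Sk, this]

lemma coord (k n : ℕ) (ℓ : Fin (k+1)) :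
    ∑ f ∈ Om (k+1) n, ((f ℓ : ℕ) : ℝ) * ∏ i, Bb (f i)
      = ∑ f ∈ Om (k+1) n, ((f 0 : ℕ) : ℝ) * ∏ i, Bb (f i) := by
  refine Finset.sum_nbij' (fun f => f ∘ (Equiv.swap 0 ℓ)) (fun f => f ∘ (Equiv.swap 0 ℓ))
    ?_ ?_ ?_ ?_ ?_
  · intro f hf
    rcases mem_Om.mp hf with ⟨hs, hp⟩
    refine mem_Om.mpr ⟨?_, fun i => hp _⟩
    simpa [Function.comp] using (Equiv.sum_comp (Equiv.swap 0 ℓ) f).trans hs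
  · intro f hf
    rcases mem_Om.mp hf with ⟨hs, hp⟩
    refine mem_Om.mpr ⟨?_, fun i => hp _⟩
    simpa [Function.comp] using (Equiv.sum_comp (Equiv.swap 0 ℓ) f).trans hs
  · intro f _; funext x; simp [Equiv.swap_apply_self]
  · intro f _; funext x; simp [Equiv.swap_apply_self]
  · intro f _
    simp only [Function.comp_apply]
    rw [Equiv.swap_apply_left]
    congr 1
    exact (Equiv.prod_comp (Equiv.swap 0 ℓ) (fun i => Bb (f i))).symm

lemma split (k n : ℕ) :
    ∑ f ∈ Om (k+1) n, ((f 0 : ℕ) : ℝ) * ∏ i, Bb (f i)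
      = ∑ m ∈ Icc 1 n, (m:ℝ) * Bb m * Sk k (n - m) := by
  have hrhs : ∑ m ∈ Icc 1 n, (m:ℝ) * Bb m * Sk k (n - m)
      = ∑ p ∈ (Icc 1 n).sigma (fun m => Om k (n - m)),
          ((p.1 : ℕ) : ℝ) * Bb p.1 * ∏ i, Bb (p.2 i) := by
    rw [Finset.sum_sigma]
    refine Finset.sum_congr rfl fun m _ => ?_
    rw [Sk, Finset.mul_sum]
  rw [hrhs]
  refine Finset.sum_nbij' (fun f => ⟨f 0, Fin.tail f⟩) (fun p => Fin.cons p.1 p.2) ?_ ?_ ?_ ?_ ?_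
  · intro f hf
    beta_reduce
    rcases mem_Om.mp hf with ⟨hs, hp⟩
    have hsum : f 0 + ∑ i : Fin k, f i.succ = n := by
      rw [← Fin.sum_univ_succ]; exact hs
    refine Finset.mem_sigma.mpr ⟨?_, ?_⟩
    · show f 0 ∈ Icc 1 n
      refine Finset.mem_Icc.mpr ⟨hp 0, by omega⟩
    · show Fin.tail f ∈ Om k (n - f 0)
      refine mem_Om.mpr ⟨?_, fun i => hp i.succ⟩
      simp only [Fin.tail]
      omega
  · rintro ⟨m, g⟩ hp
    rcases Finset.mem_sigma.mp hp with ⟨hm, hg⟩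
    rcases Finset.mem_Icc.mp hm with ⟨hm1, hm2⟩
    rcases mem_Om.mp hg with ⟨hs, hpos⟩
    have hs' : ∑ i : Fin k, g i = n - m := hs
    have hm1' : 1 ≤ m := hm1
    have hm2' : m ≤ n := hm2
    refine mem_Om.mpr ⟨?_, ?_⟩
    · rw [Fin.sum_univ_succ]
      simp only [Fin.cons_zero, Fin.cons_succ]
      omega
    · intro i
      rcases Fin.eq_zero_or_eq_succ i with h0 | ⟨j, hj⟩
      · subst h0; simpa using hm1
      · subst hj; simpa using hpos j
  · intro f _; exact Fin.cons_self_tail f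
  · rintro ⟨m, g⟩ _
    simp [Fin.tail_cons]
  · intro f _
    rw [Fin.prod_univ_succ]
    simp only [Fin.tail]
    ring

lemma hks (n k : ℕ) : (n:ℝ) * Sk (k+1) n
    = ((k:ℝ)+1) * ∑ m ∈ Icc 1 n, (m:ℝ) * Bb m * Sk k (n-m) := by
  have h1 : (n:ℝ) * Sk (k+1) n
      = ∑ f ∈ Om (k+1) n, ∑ ℓ : Fin (k+1), ((f ℓ : ℕ):ℝ) * ∏ i, Bb (f i) := by
    rw [Sk, Finset.mul_sum]
    refine Finset.sum_congr rfl fun f hf => ?_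
    rcases mem_Om.mp hf with ⟨hs, _⟩
    rw [← Finset.sum_mul]
    congr 1
    rw [← hs]
    exact Nat.cast_sum _ _
  rw [h1, Finset.sum_comm]
  have h2 : ∀ ℓ : Fin (k+1),
      (∑ f ∈ Om (k+1) n, ((f ℓ:ℕ):ℝ) * ∏ i, Bb (f i))
        = ∑ m ∈ Icc 1 n, (m:ℝ) * Bb m * Sk k (n-m) :=
    fun ℓ => (coord k n ℓ).trans (split k n)
  rw [Finset.sum_congr rfl (fun ℓ _ => h2 ℓ), Finset.sum_const, Finset.card_univ,
    Fintype.card_fin, nsmul_eq_mul]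
  push_cast
  ring

lemma L4 (n : ℕ) (hn : 1 ≤ n) :
    (n:ℝ) * Pp n = ∑ m ∈ Icc 1 n, (m:ℝ) * Bb m * Pp (n - m) := by
  have c1 : (n:ℝ) * Pp n = ∑ k ∈ range (n+1), ((n:ℝ) * Sk k n) / (k.factorial : ℝ) := by
    rw [Pp, Finset.mul_sum]
    exact Finset.sum_congr rfl fun k _ => (mul_div_assoc _ _ _).symm
  rw [c1, Finset.sum_range_succ' (fun k => ((n:ℝ) * Sk k n) / (k.factorial : ℝ)) n]
  have c2 : ((n:ℝ) * Sk 0 n) / ((0:ℕ).factorial : ℝ) = 0 := by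
    rw [Sk_zero_succ n hn]; simp
  rw [c2, add_zero]
  have c3 : ∀ k ∈ range n, ((n:ℝ) * Sk (k+1) n) / ((k+1).factorial : ℝ)
      = ∑ m ∈ Icc 1 n, ((m:ℝ) * Bb m) * (Sk k (n-m) / (k.factorial : ℝ)) := by
    intro k _
    rw [hks n k, Nat.factorial_succ]
    push_cast
    rw [mul_comm ((k:ℝ)+1) (k.factorial : ℝ), ← div_div,
      mul_div_assoc, mul_div_cancel_left₀ _ (by positivity : ((k:ℝ)+1) ≠ 0)]
    rw [Finset.sum_div]
    exact Finset.sum_congr rfl fun m _ => by ring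
  rw [Finset.sum_congr rfl c3, Finset.sum_comm]
  refine Finset.sum_congr rfl fun m hm => ?_
  rcases Finset.mem_Icc.mp hm with ⟨hm1, hm2⟩
  rw [← Finset.mul_sum]
  have c4 : ∑ k ∈ range n, Sk k (n-m) / (k.factorial : ℝ) = Pp (n - m) := by
    rw [Pp]
    symm
    apply Finset.sum_subset
    · intro x hx
      simp only [Finset.mem_range] at hx ⊢
      omega
    · intro x _ hx
      simp only [Finset.mem_range] at hx
      rw [Sk_big (by omega)]
      simp
  rw [c4]

lemma Pp_eq : ∀ n : ℕ, Pp n = (((n:ℝ)+1))^n / (((n+1).factorial : ℕ) : ℝ) := by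
  intro n
  induction n using Nat.strong_induction_on with
  | _ n ih =>
    match n with
    | 0 =>
      rw [Pp]
      simp [Sk_zero_zero]
    | (N+1) =>
      have hN : 1 ≤ N+1 := by omega
      have hrec := L4 (N+1) hN
      have hterm : ∀ m ∈ Icc 1 (N+1), (m:ℝ) * Bb m * Pp ((N+1) - m)
          = (((N+1).choose m : ℝ) * (m:ℝ)^m * ((((N+1)-m : ℕ):ℝ)+1)^((N+1)-m-1))
              / (((N+1).factorial : ℕ) : ℝ) := by
        intro m hm
        rcases Finset.mem_Icc.mp hm with ⟨hm1, hm2⟩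
        obtain ⟨j, hj⟩ : ∃ j, (N + 1) - m = j := ⟨_, rfl⟩
        rw [ih ((N+1) - m) (by omega), Bb, hj]
        have e1 : (m:ℝ)^m = (m:ℝ)^(m-1) * (m:ℝ) := by
          rw [← pow_succ]; congr 1; omega
        have e2 : ((j:ℝ)+1)^j = ((j:ℝ)+1)^(j-1) * ((j:ℝ)+1) := by
          rcases Nat.eq_zero_or_pos j with h0 | hpos
          · subst h0; norm_num
          · rw [← pow_succ]; congr 1; omega
        have e3 : (((j+1).factorial : ℕ) : ℝ) = ((j:ℝ)+1) * ((j.factorial : ℕ) : ℝ) := by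
          rw [Nat.factorial_succ]; push_cast; ring
        have e4 : ((N+1).choose m : ℝ) * ((m.factorial : ℕ) : ℝ) * ((j.factorial : ℕ) : ℝ)
            = (((N+1).factorial : ℕ) : ℝ) := by
          rw [← hj]
          exact_mod_cast congrArg (Nat.cast (R := ℝ)) (Nat.choose_mul_factorial_mul_factorial hm2)
        have hb0 : ((j:ℝ)+1) ≠ 0 := by positivity
        have hf1 : ((m.factorial : ℕ) : ℝ) ≠ 0 := by
          exact_mod_cast Nat.factorial_ne_zero m
        have hf2 : ((j.factorial : ℕ) : ℝ) ≠ 0 := by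
          exact_mod_cast Nat.factorial_ne_zero _
        have hf3 : (((N+1).factorial : ℕ) : ℝ) ≠ 0 := by
          exact_mod_cast Nat.factorial_ne_zero _
        have hC : ((N+1).choose m : ℝ) ≠ 0 := by
          have := Nat.choose_pos hm2
          positivity
        rw [e3, e2, e1, ← e4]
        field_simp
      rw [Finset.sum_congr rfl hterm, ← Finset.sum_div, C1 (N+1) hN] at hrec
      simp only [Nat.add_sub_cancel] at hrec
      have e5 : ((((N+1):ℕ):ℝ)+1)^(N+1) = ((((N+1):ℕ):ℝ)+1)^N * ((((N+1):ℕ):ℝ)+1) := by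
        rw [← pow_succ]
      have e6 : (((N+1+1).factorial : ℕ) : ℝ) = ((((N+1):ℕ):ℝ)+1) * (((N+1).factorial : ℕ) : ℝ) := by
        rw [Nat.factorial_succ]; push_cast; ring
      have hN0 : (((N+1):ℕ):ℝ) ≠ 0 := by positivity
      apply mul_left_cancel₀ hN0
      rw [hrec, e5, e6]
      have hf3 : (((N+1).factorial : ℕ) : ℝ) ≠ 0 := by
        exact_mod_cast Nat.factorial_ne_zero _
      have hb1 : ((((N+1):ℕ):ℝ)+1) ≠ 0 := by positivity
      field_simp


theorem stmt3 (lam : ℝ) (h0 : 0 < lam) (h1 : lam ≤ 1) (n : ℕ) (hn : 1 ≤ n) :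
    (lam * (n + 1)) ^ n / (n + 1).factorial * Real.exp (-(lam * (n + 1)))
    = ∑ k ∈ Finset.Icc 1 n, (lam ^ k / k.factorial * Real.exp (-lam)) *
        ∑ f ∈ (Finset.Nat.antidiagonalTuple k n).filter (fun f => ∀ i, 1 ≤ f i),
          ∏ ℓ, (lam * f ℓ) ^ (f ℓ - 1) / (f ℓ).factorial * Real.exp (-(lam * f ℓ)) := by
  have hinner : ∀ k, ∀ f ∈ Om k n,
      (∏ ℓ, (lam * f ℓ) ^ (f ℓ - 1) / (f ℓ).factorial * Real.exp (-(lam * f ℓ)))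
        = lam^(n-k) * Real.exp (-(lam * n)) * ∏ ℓ, Bb (f ℓ) := by
    intro k f hf
    rcases mem_Om.mp hf with ⟨hs, hp⟩
    have hterm : ∀ ℓ : Fin k, (lam * f ℓ) ^ (f ℓ - 1) / (f ℓ).factorial * Real.exp (-(lam * f ℓ))
        = lam^(f ℓ - 1) * Real.exp (-(lam * f ℓ)) * Bb (f ℓ) := by
      intro ℓ
      rw [mul_pow, Bb]
      ring
    rw [Finset.prod_congr rfl (fun ℓ _ => hterm ℓ), Finset.prod_mul_distrib,
      Finset.prod_mul_distrib]
    congr 1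
    congr 1
    · rw [Finset.prod_pow_eq_pow_sum]
      congr 1
      have hsum : ∑ ℓ, (f ℓ - 1) + k = n := by
        have : ∑ ℓ : Fin k, (f ℓ - 1) + ∑ _ℓ : Fin k, 1 = ∑ ℓ : Fin k, ((f ℓ - 1) + 1) := by
          rw [← Finset.sum_add_distrib]
        have h2 : ∑ ℓ : Fin k, ((f ℓ - 1) + 1) = ∑ ℓ, f ℓ := by
          refine Finset.sum_congr rfl fun ℓ _ => ?_
          have := hp ℓ
          omega
        simp only [Finset.sum_const, Finset.card_univ, Fintype.card_fin, smul_eq_mul, mul_one] at this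
        omega
      omega
    · rw [← Real.exp_sum]
      congr 1
      have : ∑ ℓ : Fin k, -(lam * (f ℓ : ℝ)) = -(lam * ∑ ℓ : Fin k, ((f ℓ : ℕ) : ℝ)) := by
        rw [Finset.mul_sum, ← Finset.sum_neg_distrib]
      rw [this, ← Nat.cast_sum, hs]
  have hksum : ∀ k ∈ Icc 1 n,
      (lam ^ k / k.factorial * Real.exp (-lam)) *
        ∑ f ∈ Om k n, ∏ ℓ, (lam * f ℓ) ^ (f ℓ - 1) / (f ℓ).factorial * Real.exp (-(lam * f ℓ))
      = lam^n * Real.exp (-(lam * ((n:ℝ)+1))) * (Sk k n / k.factorial) := by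
    intro k hk
    rcases Finset.mem_Icc.mp hk with ⟨_, hk2⟩
    rw [Finset.sum_congr rfl (hinner k), ← Finset.mul_sum, ← Sk]
    have e1 : lam ^ k * lam ^ (n-k) = lam ^ n := by
      rw [← pow_add]; congr 1; omega
    have e2 : Real.exp (-lam) * Real.exp (-(lam * n)) = Real.exp (-(lam * ((n:ℝ)+1))) := by
      rw [← Real.exp_add]; congr 1; ring
    calc lam ^ k / ↑k.factorial * Real.exp (-lam) * (lam ^ (n - k) * Real.exp (-(lam * ↑n)) * Sk k n)
        = (lam ^ k * lam ^ (n-k)) * (Real.exp (-lam) * Real.exp (-(lam * n))) * (Sk k n / k.factorial) := by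
          ring
      _ = lam^n * Real.exp (-(lam * ((n:ℝ)+1))) * (Sk k n / k.factorial) := by rw [e1, e2]
  have hOm : ∀ k : ℕ, (Finset.Nat.antidiagonalTuple k n).filter (fun f => ∀ i, 1 ≤ f i) = Om k n :=
    fun k => rfl
  calc (lam * (n + 1)) ^ n / (n + 1).factorial * Real.exp (-(lam * (n + 1)))
      = lam^n * Real.exp (-(lam * ((n:ℝ)+1))) * ((((n:ℝ)+1))^n / (((n+1).factorial : ℕ) : ℝ)) := by
        rw [mul_pow]; ring
    _ = lam^n * Real.exp (-(lam * ((n:ℝ)+1))) * Pp n := by rw [Pp_eq n]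
    _ = lam^n * Real.exp (-(lam * ((n:ℝ)+1))) * ∑ k ∈ Icc 1 n, Sk k n / k.factorial := by
        congr 1
        rw [Pp]
        have hins : range (n+1) = insert 0 (Icc 1 n) := by
          ext x
          simp only [Finset.mem_range, Finset.mem_insert, Finset.mem_Icc]
          omega
        rw [hins, Finset.sum_insert (by simp)]
        rw [Sk_zero_succ n hn]
        simp
    _ = ∑ k ∈ Icc 1 n, lam^n * Real.exp (-(lam * ((n:ℝ)+1))) * (Sk k n / k.factorial) := by
        rw [Finset.mul_sum]
    _ = ∑ k ∈ Finset.Icc 1 n, (lam ^ k / k.factorial * Real.exp (-lam)) *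
        ∑ f ∈ (Finset.Nat.antidiagonalTuple k n).filter (fun f => ∀ i, 1 ≤ f i),
          ∏ ℓ, (lam * f ℓ) ^ (f ℓ - 1) / (f ℓ).factorial * Real.exp (-(lam * f ℓ)) := by
        refine Finset.sum_congr rfl fun k hk => ?_
        rw [hOm k, hksum k hk]
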